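/- arXiv:2202.13234 — 4 statements merged into one kernel-verified Lean document; each statement's English description precedes it below -/
import Mathlib

section
/- For any fixed probability vector π_e positive on the support of π_Δ, the function (r, σ) ↦ ∑_a π_Δ(a)²/π_e(a) (σ_a² + r_a²) − (∑_a π_Δ(a) r_a)² over the instance set {0 ≤ r_a ≤ 1, 0 ≤ σ_a ≤ σ} attains its maximum at r_a = 1 for all a and σ_a = σ for all a, where the maximum value is (σ² + 1) ∑_a π_Δ(a)²/π_e(a). -/
open Finset

/-- For fixed `π_e`, the map `(r, σ) ↦ ∑_a π_Δ(a)²/π_e(a)(σ_a² + r_a²)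
− (∑_a π_Δ(a) r_a)²` over the box `0 ≤ r ≤ 1`, `0 ≤ σ_a ≤ σmax` is maximized
at `r ≡ 1`, `σ ≡ σmax`, with maximum value `(σmax² + 1) ∑_a π_Δ(a)²/π_e(a)`. -/
theorem stmt8 (K : ℕ) (σmax : ℝ) (hσ : 0 < σmax)
    (π1 π0 : Fin K → ℝ)
    (hπ1 : ∀ a, 0 ≤ π1 a) (hπ1sum : (∑ a, π1 a) = 1)
    (hπ0 : ∀ a, 0 ≤ π0 a) (hπ0sum : (∑ a, π0 a) = 1)
    (πΔ : Fin K → ℝ) (hπΔ : ∀ a, πΔ a = π1 a - π0 a)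
    (πe : Fin K → ℝ) (hπe0 : ∀ a, 0 ≤ πe a) (hπesum : (∑ a, πe a) = 1)
    (hpos : ∀ a, πΔ a ≠ 0 → 0 < πe a) :
    (∀ r σ : Fin K → ℝ, (∀ a, 0 ≤ r a ∧ r a ≤ 1) →
        (∀ a, 0 ≤ σ a ∧ σ a ≤ σmax) →
        (∑ a ∈ univ.filter (fun a => πΔ a ≠ 0),
            (πΔ a) ^ 2 / πe a * ((σ a) ^ 2 + (r a) ^ 2))
          - (∑ a, πΔ a * r a) ^ 2
        ≤ (σmax ^ 2 + 1) * ∑ a ∈ univ.filter (fun a => πΔ a ≠ 0), (πΔ a) ^ 2 / πe a) ∧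
    (∑ a ∈ univ.filter (fun a => πΔ a ≠ 0),
        (πΔ a) ^ 2 / πe a * (σmax ^ 2 + (1 : ℝ) ^ 2))
      - (∑ a, πΔ a * (1 : ℝ)) ^ 2
      = (σmax ^ 2 + 1) * ∑ a ∈ univ.filter (fun a => πΔ a ≠ 0), (πΔ a) ^ 2 / πe a := by
  constructor
  · intro r σ hr hσ'
    have h1 : (∑ a ∈ univ.filter (fun a => πΔ a ≠ 0),
        (πΔ a) ^ 2 / πe a * ((σ a) ^ 2 + (r a) ^ 2))
        ≤ ∑ a ∈ univ.filter (fun a => πΔ a ≠ 0),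
        (πΔ a) ^ 2 / πe a * (σmax ^ 2 + 1) := by
      apply Finset.sum_le_sum
      intro a ha
      simp only [mem_filter] at ha
      have hpa := hpos a ha.2
      have hnn : 0 ≤ (πΔ a) ^ 2 / πe a := div_nonneg (sq_nonneg _) hpa.le
      apply mul_le_mul_of_nonneg_left _ hnn
      have h2 : (σ a) ^ 2 ≤ σmax ^ 2 := by
        have := hσ' a
        nlinarith [this.1, this.2]
      have h3 : (r a) ^ 2 ≤ 1 := by
        have := hr a
        nlinarith [this.1, this.2]
      linarith
    have h4 : 0 ≤ (∑ a, πΔ a * r a) ^ 2 := sq_nonneg _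
    calc _ ≤ ∑ a ∈ univ.filter (fun a => πΔ a ≠ 0),
          (πΔ a) ^ 2 / πe a * (σmax ^ 2 + 1) := by linarith
      _ = (σmax ^ 2 + 1) * ∑ a ∈ univ.filter (fun a => πΔ a ≠ 0),
          (πΔ a) ^ 2 / πe a := by rw [Finset.mul_sum]; apply Finset.sum_congr rfl; intros; ring
  · have hsum : (∑ a, πΔ a * (1 : ℝ)) = 0 := by
      simp only [mul_one]
      have : (∑ a, πΔ a) = ∑ a, (π1 a - π0 a) := by
        apply Finset.sum_congr rfl; intro a _; rw [hπΔ]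
      rw [this, Finset.sum_sub_distrib, hπ1sum, hπ0sum]; ring
    rw [hsum]
    rw [Finset.mul_sum]
    rw [sub_eq_iff_eq_add]
    simp only [ne_eq]
    rw [show (0:ℝ)^2 = 0 by ring, add_zero]
    apply Finset.sum_congr rfl; intros; ring
end

section
/- Let π_e* be the minimizer of ∑_a π_Δ(a)²/π_e(a) over a convex feasible set Π of probability vectors positive on the support of π_Δ. Then π_e* is minimax optimal: π_e* minimizes over π_e ∈ Π the quantity max over instances (r,σ) ∈ [0,1]^K × [0,σ]^K of ν(π_e; r, σ) := ∑_a π_Δ(a)²/π_e(a)(σ_a² + r_a²) − (∑_a π_Δ(a) r_a)². -/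
open Finset

/-- Minimax optimality: if `π_e*` minimizes the surrogate
`∑_a π_Δ(a)²/π_e(a)` over a feasible set `Π`, then it minimizes the
worst-case variance `sup_{(r,σ) ∈ [0,1]^K × [0,σmax]^K} ν(π_e; r, σ)`. -/
theorem stmt9 (K : ℕ) (σmax : ℝ) (hσ : 0 < σmax)
    (π1 π0 : Fin K → ℝ)
    (hπ1 : ∀ a, 0 ≤ π1 a) (hπ1sum : (∑ a, π1 a) = 1)
    (hπ0 : ∀ a, 0 ≤ π0 a) (hπ0sum : (∑ a, π0 a) = 1)
    (hne : π1 ≠ π0)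
    (πΔ : Fin K → ℝ) (hπΔ : ∀ a, πΔ a = π1 a - π0 a)
    (Pi : Set (Fin K → ℝ))
    (hPi : ∀ πe ∈ Pi, (∀ a, 0 ≤ πe a) ∧ (∑ a, πe a) = 1 ∧
      ∀ a, πΔ a ≠ 0 → 0 < πe a)
    (ν : (Fin K → ℝ) → (Fin K → ℝ) → (Fin K → ℝ) → ℝ)
    (hν : ∀ πe r σ, ν πe r σ =
      (∑ a ∈ univ.filter (fun a => πΔ a ≠ 0),
          (πΔ a) ^ 2 / πe a * ((σ a) ^ 2 + (r a) ^ 2))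
        - (∑ a, πΔ a * r a) ^ 2)
    (πestar : Fin K → ℝ) (hstar : πestar ∈ Pi)
    (hmin : ∀ πe ∈ Pi,
      (∑ a ∈ univ.filter (fun a => πΔ a ≠ 0), (πΔ a) ^ 2 / πestar a)
        ≤ ∑ a ∈ univ.filter (fun a => πΔ a ≠ 0), (πΔ a) ^ 2 / πe a) :
    ∀ πe ∈ Pi,
      sSup {v : ℝ | ∃ r σ : Fin K → ℝ, (∀ a, 0 ≤ r a ∧ r a ≤ 1) ∧
          (∀ a, 0 ≤ σ a ∧ σ a ≤ σmax) ∧ v = ν πestar r σ}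
        ≤ sSup {v : ℝ | ∃ r σ : Fin K → ℝ, (∀ a, 0 ≤ r a ∧ r a ≤ 1) ∧
          (∀ a, 0 ≤ σ a ∧ σ a ≤ σmax) ∧ v = ν πe r σ} := by
  intro πe hπe
  obtain ⟨hπe0, hπesum, hπepos⟩ := hPi πe hπe
  obtain ⟨hs0, hssum, hspos⟩ := hPi πestar hstar
  set s := univ.filter (fun a : Fin K => πΔ a ≠ 0) with hs
  -- uniform upper bound on ν over the box
  have key : ∀ (π : Fin K → ℝ), (∀ a, πΔ a ≠ 0 → 0 < π a) →
      ∀ r σ : Fin K → ℝ, (∀ a, 0 ≤ r a ∧ r a ≤ 1) → (∀ a, 0 ≤ σ a ∧ σ a ≤ σmax) →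
      ν π r σ ≤ (∑ a ∈ s, (πΔ a) ^ 2 / π a) * (σmax ^ 2 + 1) := by
    intro π hπ r σ hr hσ'
    rw [hν]
    have h1 : ∑ a ∈ s, (πΔ a) ^ 2 / π a * ((σ a) ^ 2 + (r a) ^ 2)
        ≤ ∑ a ∈ s, (πΔ a) ^ 2 / π a * (σmax ^ 2 + 1) := by
      apply Finset.sum_le_sum
      intro a ha
      have hπa : 0 < π a := hπ a (by simpa [hs] using ha)
      have hc : 0 ≤ (πΔ a) ^ 2 / π a := by positivity
      have hb : (σ a) ^ 2 + (r a) ^ 2 ≤ σmax ^ 2 + 1 := by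
        nlinarith [(hσ' a).1, (hσ' a).2, (hr a).1, (hr a).2]
      nlinarith
    have h2 := sq_nonneg (∑ a, πΔ a * r a)
    have h3 : (∑ a ∈ s, (πΔ a) ^ 2 / π a * (σmax ^ 2 + 1))
        = (∑ a ∈ s, (πΔ a) ^ 2 / π a) * (σmax ^ 2 + 1) := by
      rw [Finset.sum_mul]
    linarith
  have hsumΔ : (∑ a, πΔ a) = 0 := by
    have : (∑ a, πΔ a) = (∑ a, π1 a) - (∑ a, π0 a) := by
      rw [← Finset.sum_sub_distrib]
      exact Finset.sum_congr rfl (fun a _ => hπΔ a)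
    rw [this, hπ1sum, hπ0sum]; ring
  -- the witness value for πe
  have hval : ν πe (fun _ => 1) (fun _ => σmax) =
      (∑ a ∈ s, (πΔ a) ^ 2 / πe a) * (σmax ^ 2 + 1) := by
    rw [hν]
    simp only [one_pow, mul_one, hsumΔ]
    rw [Finset.sum_mul]
    ring
  have hbdd : BddAbove {v : ℝ | ∃ r σ : Fin K → ℝ, (∀ a, 0 ≤ r a ∧ r a ≤ 1) ∧
      (∀ a, 0 ≤ σ a ∧ σ a ≤ σmax) ∧ v = ν πe r σ} := by
    refine ⟨(∑ a ∈ s, (πΔ a) ^ 2 / πe a) * (σmax ^ 2 + 1), ?_⟩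
    rintro v ⟨r, σ', h1, h2, rfl⟩
    exact key πe hπepos r σ' h1 h2
  have hmem : ν πe (fun _ => 1) (fun _ => σmax) ∈ {v : ℝ | ∃ r σ : Fin K → ℝ,
      (∀ a, 0 ≤ r a ∧ r a ≤ 1) ∧ (∀ a, 0 ≤ σ a ∧ σ a ≤ σmax) ∧ v = ν πe r σ} :=
    ⟨fun _ => 1, fun _ => σmax, fun a => ⟨zero_le_one, le_refl 1⟩,
      fun a => ⟨le_of_lt hσ, le_refl σmax⟩, rfl⟩
  have hwit : (∑ a ∈ s, (πΔ a) ^ 2 / πe a) * (σmax ^ 2 + 1)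
      ≤ sSup {v : ℝ | ∃ r σ : Fin K → ℝ, (∀ a, 0 ≤ r a ∧ r a ≤ 1) ∧
        (∀ a, 0 ≤ σ a ∧ σ a ≤ σmax) ∧ v = ν πe r σ} :=
    hval ▸ le_csSup hbdd hmem
  have hSnn : 0 ≤ ∑ a ∈ s, (πΔ a) ^ 2 / πe a :=
    Finset.sum_nonneg fun a ha => by
      have := hπepos a (by simpa [hs] using ha); positivity
  have hsup_nn : 0 ≤ sSup {v : ℝ | ∃ r σ : Fin K → ℝ, (∀ a, 0 ≤ r a ∧ r a ≤ 1) ∧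
      (∀ a, 0 ≤ σ a ∧ σ a ≤ σmax) ∧ v = ν πe r σ} := by
    refine le_trans ?_ hwit
    have : (0:ℝ) < σmax ^ 2 + 1 := by positivity
    positivity
  apply Real.sSup_le _ hsup_nn
  rintro v ⟨r, σ', h1, h2, rfl⟩
  calc ν πestar r σ' ≤ (∑ a ∈ s, (πΔ a) ^ 2 / πestar a) * (σmax ^ 2 + 1) :=
        key πestar hspos r σ' h1 h2
    _ ≤ (∑ a ∈ s, (πΔ a) ^ 2 / πe a) * (σmax ^ 2 + 1) := by
        have := hmin πe hπe
        nlinarith [sq_nonneg σmax]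
    _ ≤ _ := hwit
end

section
/- Suppose π_1 ≠ π_0. For any exploration policy π_e positive on the support of π_Δ, there exist an instance (r, {σ_a}) and an alternative policy b' such that ν(π_e; r, {σ_a}) > ν(b'; r, {σ_a}). In other words, no single policy minimizes the IPW variance simultaneously across all instances. -/
open Finset

/-- No single exploration policy dominates all instances: if `π_1 ≠ π_0`,
then for any feasible `π_e` there exist an instance `(r, σ)` and a feasible
policy `b'` with strictly smaller IPW variance `ν`. -/
theorem stmt11 (K : ℕ) (π1 π0 : Fin K → ℝ)
    (hπ1 : ∀ a, 0 ≤ π1 a) (hπ1sum : (∑ a, π1 a) = 1)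
    (hπ0 : ∀ a, 0 ≤ π0 a) (hπ0sum : (∑ a, π0 a) = 1)
    (hne : π1 ≠ π0)
    (πΔ : Fin K → ℝ) (hπΔ : ∀ a, πΔ a = π1 a - π0 a)
    (ν : (Fin K → ℝ) → (Fin K → ℝ) → (Fin K → ℝ) → ℝ)
    (hν : ∀ πe r σ, ν πe r σ =
      (∑ a ∈ univ.filter (fun a => πΔ a ≠ 0),
          (πΔ a) ^ 2 / πe a * ((σ a) ^ 2 + (r a) ^ 2))
        - (∑ a, πΔ a * r a) ^ 2)
    (πe : Fin K → ℝ) (hπe0 : ∀ a, 0 ≤ πe a) (hπesum : (∑ a, πe a) = 1)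
    (hpos : ∀ a, πΔ a ≠ 0 → 0 < πe a) :
    ∃ (r σ b' : Fin K → ℝ),
      (∀ a, 0 ≤ r a ∧ r a ≤ 1) ∧ (∀ a, 0 ≤ σ a) ∧
      (∀ a, 0 ≤ b' a) ∧ (∑ a, b' a) = 1 ∧ (∀ a, πΔ a ≠ 0 → 0 < b' a) ∧
      ν b' r σ < ν πe r σ := by
  -- sum of πΔ is 0
  have hsum0 : (∑ a, πΔ a) = 0 := by
    have : (∑ a, πΔ a) = (∑ a, π1 a) - (∑ a, π0 a) := by
      rw [← Finset.sum_sub_distrib]; exact Finset.sum_congr rfl fun a _ => hπΔ a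
    rw [this, hπ1sum, hπ0sum]; ring
  -- there is a₀ with πΔ a₀ ≠ 0
  obtain ⟨a₀, ha₀⟩ : ∃ a, πΔ a ≠ 0 := by
    by_contra h
    push_neg at h
    apply hne
    funext a
    have := h a
    rw [hπΔ a] at this
    linarith
  -- there is a₁ ≠ a₀ with πΔ a₁ ≠ 0
  obtain ⟨a₁, ha₁ne, ha₁⟩ : ∃ a₁, a₁ ≠ a₀ ∧ πΔ a₁ ≠ 0 := by
    by_contra h
    push_neg at h
    have : (∑ a, πΔ a) = πΔ a₀ := by
      apply Finset.sum_eq_single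
      · intro b _ hb; exact h b hb
      · intro hb; exact absurd (Finset.mem_univ a₀) hb
    exact ha₀ (by rw [← this, hsum0])
  set p := πe a₀ with hp
  have hppos : 0 < p := hpos a₀ ha₀
  have hplt1 : p < 1 := by
    have hpair : πe a₀ + πe a₁ ≤ ∑ a, πe a := by
      have hsub : ({a₀, a₁} : Finset (Fin K)) ⊆ univ := Finset.subset_univ _
      have := Finset.sum_le_sum_of_subset_of_nonneg hsub
        (fun a _ _ => hπe0 a)
      rwa [Finset.sum_pair (Ne.symm ha₁ne)] at this
    have h1 : 0 < πe a₁ := hpos a₁ ha₁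
    rw [hπesum] at hpair
    linarith
  refine ⟨fun _ => 0, fun a => if a = a₀ then 1 else 0,
    fun a => if a = a₀ then (1 + p) / 2 else πe a / 2,
    fun a => ⟨le_refl 0, zero_le_one⟩,
    fun a => by by_cases h : a = a₀ <;> simp [h],
    fun a => by by_cases h : a = a₀ <;> simp [h] <;> [linarith; linarith [hπe0 a]],
    ?_, ?_, ?_⟩
  · -- sum of b' = 1
    have hform : ∀ a : Fin K, (if a = a₀ then (1 + p) / 2 else πe a / 2)
        = πe a / 2 + (if a = a₀ then (1:ℝ)/2 else 0) := by
      intro a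
      by_cases h : a = a₀
      · subst h; simp; ring
      · simp [h]
    rw [Finset.sum_congr rfl fun a _ => hform a, Finset.sum_add_distrib,
      Finset.sum_ite_eq' univ a₀ (fun _ => (1:ℝ)/2), ← Finset.sum_div, hπesum]
    norm_num
  · -- positivity on support
    intro a ha
    by_cases h : a = a₀
    · simp [h]; linarith
    · simp [h]; exact hpos a ha
  · -- the variance inequality
    have hsum_eval : ∀ q : Fin K → ℝ,
        (∑ a ∈ univ.filter (fun a => πΔ a ≠ 0),
          (πΔ a) ^ 2 / q a * (((if a = a₀ then (1:ℝ) else 0)) ^ 2 + (0:ℝ) ^ 2))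
        = (πΔ a₀) ^ 2 / q a₀ := by
      intro q
      rw [Finset.sum_eq_single_of_mem a₀ (by simp [ha₀])]
      · simp
      · intro b _ hb; simp [hb]
    rw [hν, hν]
    simp only [hsum_eval]
    have h2 : (∑ a, πΔ a * (0:ℝ)) = 0 := by simp
    rw [h2]
    have hsq : 0 < (πΔ a₀) ^ 2 := by positivity
    have hlt : p < (1 + p) / 2 := by linarith
    have : (πΔ a₀) ^ 2 / ((1 + p) / 2) < (πΔ a₀) ^ 2 / p := by
      apply div_lt_div_of_pos_left hsq hppos hlt
    split_ifs <;> linarith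
end

section
/- Let a', a'' be arms with π_Δ(a') ≠ 0 ≠ π_Δ(a''), and π_e a policy with π_e(a'), π_e(a'') > 0. Define b' by b'(a') = π_e(a')/2, b'(a'') = π_e(a')/2 + π_e(a''), and b'(a) = π_e(a) otherwise. Then b' is a probability vector, and for the instance with r ≡ 0, σ_{a'} = 0, σ_{a''} = 1, σ_a = 0 for other a, we have ν(π_e) − ν(b') = (1/π_e(a'') − 1/(π_e(a')/2 + π_e(a''))) π_Δ(a'')² > 0. -/
open Finset

/-- Explicit counter-example construction: moving mass from arm `a'` to the
high-variance arm `a''` strictly decreases the IPW variance on the instance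
with `r ≡ 0`, `σ_{a''} = 1` and `σ = 0` elsewhere. -/
theorem stmt12 (K : ℕ) (π1 π0 : Fin K → ℝ)
    (hπ1 : ∀ a, 0 ≤ π1 a) (hπ1sum : (∑ a, π1 a) = 1)
    (hπ0 : ∀ a, 0 ≤ π0 a) (hπ0sum : (∑ a, π0 a) = 1)
    (hne : π1 ≠ π0)
    (πΔ : Fin K → ℝ) (hπΔ : ∀ a, πΔ a = π1 a - π0 a)
    (a' a'' : Fin K) (hdiff : a' ≠ a'')
    (hΔ' : πΔ a' ≠ 0) (hΔ'' : πΔ a'' ≠ 0)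
    (πe : Fin K → ℝ) (hπe0 : ∀ a, 0 ≤ πe a) (hπesum : (∑ a, πe a) = 1)
    (hpos' : 0 < πe a') (hpos'' : 0 < πe a'')
    (b' : Fin K → ℝ)
    (hb' : ∀ a, b' a = if a = a' then πe a' / 2
      else if a = a'' then πe a' / 2 + πe a'' else πe a)
    (σ : Fin K → ℝ) (hσ : ∀ a, σ a = if a = a'' then 1 else 0)
    (ν : (Fin K → ℝ) → ℝ)
    (hν : ∀ π, ν π = ∑ a ∈ univ.filter (fun a => πΔ a ≠ 0),
      (πΔ a) ^ 2 * (σ a) ^ 2 / π a) :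
    ((∀ a, 0 ≤ b' a) ∧ (∑ a, b' a) = 1) ∧
    ν πe - ν b' = (1 / πe a'' - 1 / (πe a' / 2 + πe a'')) * (πΔ a'') ^ 2 ∧
    0 < ν πe - ν b' := by
  have hb'' : b' a'' = πe a' / 2 + πe a'' := by
    rw [hb' a'']; simp [hdiff.symm]
  have key : ∀ π : Fin K → ℝ, ν π = πΔ a'' ^ 2 / π a'' := by
    intro π
    rw [hν, Finset.sum_eq_single_of_mem a'' (by simp [hΔ''])]
    · simp [hσ]
    · intro b _ hb; simp [hσ, hb]
  have hsum : (πe a' / 2 + πe a'') > 0 := by positivity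
  refine ⟨⟨?_, ?_⟩, ?_, ?_⟩
  · intro a
    rw [hb' a]
    split_ifs with h1 h2
    · positivity
    · positivity
    · exact hπe0 a
  · have : ∀ a, b' a = πe a + ((if a = a' then -(πe a' / 2) else 0)
        + (if a = a'' then πe a' / 2 else 0)) := by
      intro a
      rw [hb' a]
      by_cases h1 : a = a'
      · subst h1; simp [hdiff]; ring
      · by_cases h2 : a = a''
        · subst h2; simp [h1]; ring
        · simp [h1, h2]
    simp only [this, Finset.sum_add_distrib, Finset.sum_ite_eq', Finset.mem_univ,
      if_true, hπesum]
    ring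
  · rw [key, key, hb'']
    field_simp
  · rw [key, key, hb'']
    have hΔsq : 0 < πΔ a'' ^ 2 := by positivity
    have h1 : πΔ a'' ^ 2 / (πe a' / 2 + πe a'') < πΔ a'' ^ 2 / πe a'' := by
      apply div_lt_div_of_pos_left hΔsq hpos''
      linarith
    linarith
end
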